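/- Let H be a finite simple graph on r vertices, and for d ≥ r let φ(d) = ε(K_d − H) − ε(K_d), where K_d − H is the graph on [d] obtained from K_d by deleting the edges of H (H embedded on the first r vertices). Then φ(d+1) − φ(d) = ψ(H) − 2|E(H)| for all d ≥ r, where ψ(H) is the number of induced paths of length 2 in H. -/

import Mathlib

open Finset SimpleGraph

/-- A 4-cycle exists within the vertex set `s` of the graph `G`. -/
def fourCycleOn {V : Type*} (G : SimpleGraph V) (s : Set V) : Prop :=
  ∃ a b c d, a ∈ s ∧ b ∈ s ∧ c ∈ s ∧ d ∈ s ∧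
    a ≠ b ∧ a ≠ c ∧ a ≠ d ∧ b ≠ c ∧ b ≠ d ∧ c ≠ d ∧
    G.Adj a b ∧ G.Adj b c ∧ G.Adj c d ∧ G.Adj d a

/-- The pair of edges `{e,f}` spans an edge of the edge polytope: they share a
vertex, or they are disjoint and the induced subgraph on their endpoints has no 4-cycle. -/
def epPair {V : Type*} (G : SimpleGraph V) (e f : Sym2 V) : Prop :=
  (∃ v, v ∈ e ∧ v ∈ f) ∨
  ((¬ ∃ v, v ∈ e ∧ v ∈ f) ∧ ¬ fourCycleOn G {v | v ∈ e ∨ v ∈ f})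

open scoped Classical in
/-- The number of edges (1-dimensional faces) of the edge polytope of `G`:
the number of unordered pairs of distinct edges satisfying `epPair`. -/
noncomputable def epsilon {V : Type*} [Fintype V] (G : SimpleGraph V) : ℕ :=
  ((G.edgeFinset.powersetCard 2).filter
    (fun s => ∀ e ∈ s, ∀ f ∈ s, e ≠ f → epPair G e f)).card

open scoped Classical in
/-- number of 4-subsets inducing a path of length 3. -/
noncomputable def aCount {V : Type*} [Fintype V] (H : SimpleGraph V) : ℕ :=
  ((univ.powersetCard 4).filter (fun s => ∃ a b c d : V,
    s = {a, b, c, d} ∧ a ≠ b ∧ a ≠ c ∧ a ≠ d ∧ b ≠ c ∧ b ≠ d ∧ c ≠ d ∧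
    H.Adj a b ∧ H.Adj b c ∧ H.Adj c d ∧ ¬H.Adj a c ∧ ¬H.Adj a d ∧ ¬H.Adj b d)).card

open scoped Classical in
/-- number of 4-subsets inducing a cycle of length 4. -/
noncomputable def bCount {V : Type*} [Fintype V] (H : SimpleGraph V) : ℕ :=
  ((univ.powersetCard 4).filter (fun s => ∃ a b c d : V,
    s = {a, b, c, d} ∧ a ≠ b ∧ a ≠ c ∧ a ≠ d ∧ b ≠ c ∧ b ≠ d ∧ c ≠ d ∧
    H.Adj a b ∧ H.Adj b c ∧ H.Adj c d ∧ H.Adj d a ∧ ¬H.Adj a c ∧ ¬H.Adj b d)).card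

open scoped Classical in
/-- number of 4-subsets inducing a path of length 2 plus an isolated vertex. -/
noncomputable def cCount {V : Type*} [Fintype V] (H : SimpleGraph V) : ℕ :=
  ((univ.powersetCard 4).filter (fun s => ∃ a b c d : V,
    s = {a, b, c, d} ∧ a ≠ b ∧ a ≠ c ∧ a ≠ d ∧ b ≠ c ∧ b ≠ d ∧ c ≠ d ∧
    H.Adj a b ∧ H.Adj b c ∧ ¬H.Adj a c ∧ ¬H.Adj a d ∧ ¬H.Adj b d ∧ ¬H.Adj c d)).card

open scoped Classical in
/-- the number of triangles of `H`. -/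
noncomputable def k3 {V : Type*} [Fintype V] (H : SimpleGraph V) : ℕ :=
  ((univ.powersetCard 3).filter (fun s => ∀ i ∈ s, ∀ j ∈ s, i ≠ j → H.Adj i j)).card

open scoped Classical in
/-- the number of 3-subsets inducing a path with exactly two edges. -/
noncomputable def psi {V : Type*} [Fintype V] (H : SimpleGraph V) : ℕ :=
  ((univ.powersetCard 3).filter (fun s => ∃ a b c : V,
    s = {a, b, c} ∧ a ≠ b ∧ a ≠ c ∧ b ≠ c ∧ H.Adj a b ∧ H.Adj b c ∧ ¬H.Adj a c)).card

/-- the complete bipartite graph `K_{m,n}` on the vertex set `[d]`, with parts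
`{0,…,m-1}` and `{m,…,m+n-1}`. -/
def bip (d m n : ℕ) : SimpleGraph (Fin d) where
  Adj i j := ((i : ℕ) < m ∧ m ≤ (j : ℕ) ∧ (j : ℕ) < m + n) ∨
    ((j : ℕ) < m ∧ m ≤ (i : ℕ) ∧ (i : ℕ) < m + n)
  symm := ⟨by intro i j h; tauto⟩
  loopless := ⟨by intro i h; omega⟩

/-- the copy of `H` on the first `r` vertices of `[d]`. -/
def embedGraph {r : ℕ} (H : SimpleGraph (Fin r)) (d : ℕ) : SimpleGraph (Fin d) where
  Adj i j := ∃ (hi : (i : ℕ) < r) (hj : (j : ℕ) < r), H.Adj ⟨i, hi⟩ ⟨j, hj⟩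
  symm := ⟨by rintro i j ⟨hi, hj, h⟩; exact ⟨hj, hi, h.symm⟩⟩
  loopless := ⟨by rintro i ⟨hi, hj, h⟩; exact H.loopless.irrefl _ h⟩

/-- the subgraph of `H` consisting of the edges in the connected component `c`. -/
def compGraph {V : Type*} (H : SimpleGraph V) (c : H.ConnectedComponent) :
    SimpleGraph V where
  Adj i j := H.Adj i j ∧ H.connectedComponentMk i = c
  symm := ⟨by
    rintro i j ⟨h, hc⟩
    exact ⟨h.symm, (SimpleGraph.ConnectedComponent.sound h.symm.reachable).trans hc⟩⟩
  loopless := ⟨by rintro i ⟨h, _⟩; exact H.loopless.irrefl i h⟩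

open scoped Classical in
/-- `|X_{i,j}|`: the number of vertices (other than `i, j`) adjacent to `i` but not `j`. -/
noncomputable def cardX {V : Type*} [Fintype V] (H : SimpleGraph V) (i j : V) : ℕ :=
  (univ.filter (fun ℓ => ℓ ≠ i ∧ ℓ ≠ j ∧ H.Adj i ℓ ∧ ¬ H.Adj j ℓ)).card


/- ==================== auxiliary development ==================== -/

namespace EPAux

open scoped Classical

variable {r : ℕ} (H : SimpleGraph (Fin r))

/-- abbreviation for `K_n - H`. -/
noncomputable abbrev Gg (n : ℕ) : SimpleGraph (Fin n) :=
  (⊤ : SimpleGraph (Fin n)) \ embedGraph H n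

open scoped Classical in
/-- the finset whose cardinality is `epsilon G`. -/
noncomputable def Tset {V : Type*} [Fintype V] (G : SimpleGraph V) : Finset (Finset (Sym2 V)) :=
  ((G.edgeFinset.powersetCard 2).filter
    (fun s => ∀ e ∈ s, ∀ f ∈ s, e ≠ f → epPair G e f))

lemma epsilon_eq {V : Type*} [Fintype V] (G : SimpleGraph V) : epsilon G = (Tset G).card := by
  rfl

lemma embed_adj_iff {n : ℕ} (i j : Fin n) :
    (embedGraph H n).Adj i j ↔
      ∃ (hi : (i : ℕ) < r) (hj : (j : ℕ) < r), H.Adj ⟨i, hi⟩ ⟨j, hj⟩ := Iff.rfl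

lemma adj_iff {n : ℕ} (i j : Fin n) :
    (Gg H n).Adj i j ↔ i ≠ j ∧
      ¬ ∃ (hi : (i : ℕ) < r) (hj : (j : ℕ) < r), H.Adj ⟨i, hi⟩ ⟨j, hj⟩ := by
  rw [SimpleGraph.sdiff_adj, SimpleGraph.top_adj, embed_adj_iff]

lemma epPair_symm {V : Type*} (G : SimpleGraph V) {e f : Sym2 V} (h : epPair G e f) :
    epPair G f e := by
  have hset : {v | v ∈ f ∨ v ∈ e} = {v | v ∈ e ∨ v ∈ f} := by
    ext v; exact or_comm
  rcases h with ⟨v, h1, h2⟩ | ⟨h1, h2⟩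
  · exact Or.inl ⟨v, h2, h1⟩
  · refine Or.inr ⟨fun ⟨v, hv1, hv2⟩ => h1 ⟨v, hv2, hv1⟩, ?_⟩
    rw [hset]; exact h2

lemma mem_Tset {V : Type*} [Fintype V] (G : SimpleGraph V)
    (s : Finset (Sym2 V)) :
    s ∈ Tset G ↔ ∃ e f, e ≠ f ∧ s = {e, f} ∧
      e ∈ G.edgeSet ∧ f ∈ G.edgeSet ∧ epPair G e f := by
  constructor
  · intro hs
    rw [Tset, Finset.mem_filter, Finset.mem_powersetCard] at hs
    obtain ⟨⟨hsub, hcard⟩, hP⟩ := hs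
    obtain ⟨e, f, hef, rfl⟩ := Finset.card_eq_two.mp hcard
    refine ⟨e, f, hef, rfl, SimpleGraph.mem_edgeFinset.mp (hsub (by simp)),
      SimpleGraph.mem_edgeFinset.mp (hsub (by simp)), ?_⟩
    exact hP e (by simp) f (by simp) hef
  · rintro ⟨e, f, hef, rfl, he, hf, hp⟩
    rw [Tset, Finset.mem_filter, Finset.mem_powersetCard]
    refine ⟨⟨?_, ?_⟩, ?_⟩
    · intro x hx
      rcases Finset.mem_insert.mp hx with rfl | hx
      · exact SimpleGraph.mem_edgeFinset.mpr he
      · rw [Finset.mem_singleton] at hx; subst hx; exact SimpleGraph.mem_edgeFinset.mpr hf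
    · exact Finset.card_pair hef
    · intro x hx y hy hxy
      simp only [Finset.mem_insert, Finset.mem_singleton] at hx hy
      rcases hx with rfl | rfl <;> rcases hy with rfl | rfl
      · exact absurd rfl hxy
      · exact hp
      · exact epPair_symm G hp
      · exact absurd rfl hxy

lemma adj_cast {d : ℕ} (i j : Fin d) :
    (Gg H (d + 1)).Adj i.castSucc j.castSucc ↔ (Gg H d).Adj i j := by
  simp only [adj_iff, Fin.coe_castSucc, ne_eq, Fin.castSucc_inj]

lemma adj_last {d : ℕ} (hd : r ≤ d) (i : Fin (d + 1)) (h : i ≠ Fin.last d) :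
    (Gg H (d + 1)).Adj i (Fin.last d) := by
  rw [adj_iff]
  refine ⟨h, ?_⟩
  rintro ⟨hi, hj, -⟩
  rw [Fin.val_last] at hj
  omega

lemma edge_cast {d : ℕ} (e : Sym2 (Fin d)) :
    Sym2.map Fin.castSucc e ∈ (Gg H (d + 1)).edgeSet ↔ e ∈ (Gg H d).edgeSet := by
  induction e using Sym2.ind with
  | _ x y =>
    simp only [Sym2.map_pair_eq, SimpleGraph.mem_edgeSet]
    exact adj_cast H x y

lemma fourCycleOn_cast {d : ℕ} (e f : Sym2 (Fin d)) :
    fourCycleOn (Gg H (d + 1))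
        {v | v ∈ Sym2.map Fin.castSucc e ∨ v ∈ Sym2.map Fin.castSucc f}
      ↔ fourCycleOn (Gg H d) {v | v ∈ e ∨ v ∈ f} := by
  constructor
  · rintro ⟨a, b, c, x, ha, hb, hc, hx, hab, hac, hax, hbc, hbx, hcx, A1, A2, A3, A4⟩
    have pull : ∀ v : Fin (d + 1),
        (v ∈ Sym2.map Fin.castSucc e ∨ v ∈ Sym2.map Fin.castSucc f) →
        ∃ v₀, v = Fin.castSucc v₀ ∧ (v₀ ∈ e ∨ v₀ ∈ f) := by
      intro v hv
      rcases hv with hv | hv <;> obtain ⟨u, hu, rfl⟩ := Sym2.mem_map.mp hv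
      exacts [⟨u, rfl, Or.inl hu⟩, ⟨u, rfl, Or.inr hu⟩]
    obtain ⟨a₀, rfl, ha₀⟩ := pull a ha
    obtain ⟨b₀, rfl, hb₀⟩ := pull b hb
    obtain ⟨c₀, rfl, hc₀⟩ := pull c hc
    obtain ⟨x₀, rfl, hx₀⟩ := pull x hx
    refine ⟨a₀, b₀, c₀, x₀, ha₀, hb₀, hc₀, hx₀, ?_, ?_, ?_, ?_, ?_, ?_, ?_, ?_, ?_, ?_⟩
    · exact fun h => hab (by rw [h])
    · exact fun h => hac (by rw [h])
    · exact fun h => hax (by rw [h])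
    · exact fun h => hbc (by rw [h])
    · exact fun h => hbx (by rw [h])
    · exact fun h => hcx (by rw [h])
    · exact (adj_cast H _ _).mp A1
    · exact (adj_cast H _ _).mp A2
    · exact (adj_cast H _ _).mp A3
    · exact (adj_cast H _ _).mp A4
  · rintro ⟨a, b, c, x, ha, hb, hc, hx, hab, hac, hax, hbc, hbx, hcx, A1, A2, A3, A4⟩
    have push : ∀ v₀ : Fin d, (v₀ ∈ e ∨ v₀ ∈ f) →
        (v₀.castSucc ∈ Sym2.map Fin.castSucc e ∨ v₀.castSucc ∈ Sym2.map Fin.castSucc f) := by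
      intro v hv
      rcases hv with hv | hv
      exacts [Or.inl (Sym2.mem_map.mpr ⟨v, hv, rfl⟩), Or.inr (Sym2.mem_map.mpr ⟨v, hv, rfl⟩)]
    refine ⟨a.castSucc, b.castSucc, c.castSucc, x.castSucc,
      push a ha, push b hb, push c hc, push x hx, ?_, ?_, ?_, ?_, ?_, ?_, ?_, ?_, ?_, ?_⟩
    · exact fun h => hab (Fin.castSucc_inj.mp h)
    · exact fun h => hac (Fin.castSucc_inj.mp h)
    · exact fun h => hax (Fin.castSucc_inj.mp h)
    · exact fun h => hbc (Fin.castSucc_inj.mp h)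
    · exact fun h => hbx (Fin.castSucc_inj.mp h)
    · exact fun h => hcx (Fin.castSucc_inj.mp h)
    · exact (adj_cast H _ _).mpr A1
    · exact (adj_cast H _ _).mpr A2
    · exact (adj_cast H _ _).mpr A3
    · exact (adj_cast H _ _).mpr A4

lemma epPair_cast {d : ℕ} (e f : Sym2 (Fin d)) :
    epPair (Gg H (d + 1)) (Sym2.map Fin.castSucc e) (Sym2.map Fin.castSucc f)
      ↔ epPair (Gg H d) e f := by
  have hshare : (∃ v, v ∈ Sym2.map Fin.castSucc e ∧ v ∈ Sym2.map Fin.castSucc f)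
      ↔ ∃ v, v ∈ e ∧ v ∈ f := by
    constructor
    · rintro ⟨v, hv1, hv2⟩
      obtain ⟨u, hu, rfl⟩ := Sym2.mem_map.mp hv1
      obtain ⟨u', hu', h⟩ := Sym2.mem_map.mp hv2
      exact ⟨u, hu, Fin.castSucc_inj.mp h ▸ hu'⟩
    · rintro ⟨v, h1, h2⟩
      exact ⟨v.castSucc, Sym2.mem_map.mpr ⟨v, h1, rfl⟩, Sym2.mem_map.mpr ⟨v, h2, rfl⟩⟩
  unfold epPair
  rw [hshare, fourCycleOn_cast]

lemma sym2_lower {d : ℕ} (e : Sym2 (Fin (d + 1))) (h : Fin.last d ∉ e) :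
    ∃ e₀, Sym2.map Fin.castSucc e₀ = e := by
  induction e using Sym2.ind with
  | _ x y =>
    have hx : x ≠ Fin.last d := by rintro rfl; exact h (Sym2.mem_mk_left _ _)
    have hy : y ≠ Fin.last d := by rintro rfl; exact h (Sym2.mem_mk_right _ _)
    obtain ⟨x₀, rfl⟩ := Fin.exists_castSucc_eq.mpr hx
    obtain ⟨y₀, rfl⟩ := Fin.exists_castSucc_eq.mpr hy
    exact ⟨s(x₀, y₀), Sym2.map_pair_eq _ _ _⟩

lemma card_notQ {d : ℕ} :
    ((Tset (Gg H (d + 1))).filter (fun s => ¬ ∃ e ∈ s, Fin.last d ∈ e)).card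
      = epsilon (Gg H d) := by
  rw [epsilon_eq]
  have hinj : Function.Injective (Sym2.map (Fin.castSucc : Fin d → Fin (d + 1))) :=
    Sym2.map.injective (Fin.castSucc_injective d)
  symm
  apply Finset.card_bij (fun s _ => s.image (Sym2.map Fin.castSucc))
  · intro s hs
    obtain ⟨e, f, hef, rfl, he, hf, hp⟩ := (mem_Tset _ _).mp hs
    rw [Finset.mem_filter]
    constructor
    · rw [mem_Tset]
      exact ⟨Sym2.map Fin.castSucc e, Sym2.map Fin.castSucc f, fun h => hef (hinj h),
        by ext x; simp,
        (edge_cast H e).mpr he, (edge_cast H f).mpr hf, (epPair_cast H e f).mpr hp⟩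
    · rintro ⟨e', he', hlast⟩
      obtain ⟨e₀, he₀, rfl⟩ := Finset.mem_image.mp he'
      obtain ⟨u, -, hu⟩ := Sym2.mem_map.mp hlast
      exact absurd hu (Fin.ne_of_lt (Fin.castSucc_lt_last u))
  · intro s1 h1 s2 h2 h
    exact Finset.image_injective hinj h
  · intro t ht
    rw [Finset.mem_filter] at ht
    obtain ⟨ht, hQ⟩ := ht
    obtain ⟨e, f, hef, rfl, he, hf, hp⟩ := (mem_Tset _ _).mp ht
    push_neg at hQ
    obtain ⟨e₀, rfl⟩ := sym2_lower e (hQ e (by simp))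
    obtain ⟨f₀, rfl⟩ := sym2_lower f (hQ f (by simp))
    refine ⟨{e₀, f₀}, ?_, ?_⟩
    · rw [mem_Tset]
      exact ⟨e₀, f₀, fun h => hef (by rw [h]), by ext x; simp,
        (edge_cast H e₀).mp he, (edge_cast H f₀).mp hf, (epPair_cast H e₀ f₀).mp hp⟩
    · ext x; simp

lemma sym2_rep {α : Type*} (e : Sym2 α) : ∃ x y, e = s(x, y) := by
  induction e using Sym2.ind with | _ x y => exact ⟨x, y, rfl⟩

lemma castSucc_ne_last' {d : ℕ} (i : Fin d) : Fin.castSucc i ≠ Fin.last d :=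
  Fin.ne_of_lt (Fin.castSucc_lt_last i)

lemma mem_edgeSet_iff {V : Type*} {G : SimpleGraph V} {v w : V} :
    s(v, w) ∈ G.edgeSet ↔ G.Adj v w := G.mem_edgeSet

lemma edgeFinset_card_indep {V : Type*} [Fintype V] (G : SimpleGraph V)
    (i1 i2 : Fintype G.edgeSet) :
    (@SimpleGraph.edgeFinset V G i1).card = (@SimpleGraph.edgeFinset V G i2).card := by
  rw [Subsingleton.elim i1 i2]

lemma card_Q1 {d : ℕ} (hd : r ≤ d) :
    (((Tset (Gg H (d + 1))).filter (fun s => ∃ e ∈ s, Fin.last d ∈ e)).filter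
        (fun s => ∀ e ∈ s, Fin.last d ∈ e)).card = d.choose 2 := by
  have hg : Function.Injective (fun u : Fin d => s(u.castSucc, Fin.last d)) := by
    intro a b h
    rcases Sym2.eq_iff.mp h with ⟨h1, -⟩ | ⟨h1, h2⟩
    · exact Fin.castSucc_inj.mp h1
    · exact absurd h1 (castSucc_ne_last' a)
  have hcnt := Finset.card_powersetCard 2 (univ : Finset (Fin d))
  rw [Finset.card_univ, Fintype.card_fin] at hcnt
  rw [← hcnt]
  symm
  apply Finset.card_bij
    (fun p _ => p.image (fun u : Fin d => s(u.castSucc, Fin.last d)))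
  · intro p hp
    rw [Finset.mem_powersetCard] at hp
    obtain ⟨a, b, hab, rfl⟩ := Finset.card_eq_two.mp hp.2
    simp only [Finset.mem_filter]
    have hmem : ∀ x : Sym2 (Fin (d + 1)),
        x ∈ ({a, b} : Finset (Fin d)).image (fun u : Fin d => s(u.castSucc, Fin.last d)) ↔
        x = s(a.castSucc, Fin.last d) ∨ x = s(b.castSucc, Fin.last d) := by
      intro x
      simp only [Finset.mem_image, Finset.mem_insert, Finset.mem_singleton]
      constructor
      · rintro ⟨u, rfl | rfl, rfl⟩
        · exact Or.inl rfl
        · exact Or.inr rfl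
      · rintro (rfl | rfl)
        · exact ⟨a, Or.inl rfl, rfl⟩
        · exact ⟨b, Or.inr rfl, rfl⟩
    refine ⟨⟨?_, ?_⟩, ?_⟩
    · rw [mem_Tset]
      refine ⟨s(a.castSucc, Fin.last d), s(b.castSucc, Fin.last d), ?_, ?_, ?_, ?_, ?_⟩
      · intro h
        rcases Sym2.eq_iff.mp h with ⟨h1, -⟩ | ⟨h1, -⟩
        · exact hab (Fin.castSucc_inj.mp h1)
        · exact castSucc_ne_last' a h1
      · ext x; rw [hmem x]; simp
      · exact mem_edgeSet_iff.mpr (adj_last H hd _ (castSucc_ne_last' a))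
      · exact mem_edgeSet_iff.mpr (adj_last H hd _ (castSucc_ne_last' b))
      · exact Or.inl ⟨Fin.last d, Sym2.mem_mk_right _ _, Sym2.mem_mk_right _ _⟩
    · exact ⟨s(a.castSucc, Fin.last d), (hmem _).mpr (Or.inl rfl), Sym2.mem_mk_right _ _⟩
    · intro x hx
      rcases (hmem x).mp hx with rfl | rfl <;> exact Sym2.mem_mk_right _ _
  · intro p1 h1 p2 h2 h
    exact Finset.image_injective hg h
  · intro t ht
    simp only [Finset.mem_filter] at ht
    obtain ⟨⟨ht, -⟩, hall⟩ := ht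
    obtain ⟨e, f, hef, rfl, he, hf, hp⟩ := (mem_Tset _ _).mp ht
    obtain ⟨y, hey⟩ := Sym2.mem_iff_exists.mp (hall e (by simp))
    obtain ⟨z, hfz⟩ := Sym2.mem_iff_exists.mp (hall f (by simp))
    subst hey; subst hfz
    have hy : y ≠ Fin.last d := fun h =>
      (Gg H (d + 1)).irrefl (h ▸ mem_edgeSet_iff.mp he)
    have hz : z ≠ Fin.last d := fun h =>
      (Gg H (d + 1)).irrefl (h ▸ mem_edgeSet_iff.mp hf)
    obtain ⟨y₀, rfl⟩ := Fin.exists_castSucc_eq.mpr hy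
    obtain ⟨z₀, rfl⟩ := Fin.exists_castSucc_eq.mpr hz
    refine ⟨{y₀, z₀}, ?_, ?_⟩
    · rw [Finset.mem_powersetCard]
      refine ⟨Finset.subset_univ _, Finset.card_pair ?_⟩
      rintro rfl
      exact hef rfl
    · ext x
      simp only [Finset.mem_image, Finset.mem_insert, Finset.mem_singleton]
      constructor
      · rintro ⟨u, hu | hu, rfl⟩ <;> subst hu
        · exact Or.inl (Sym2.eq_swap)
        · exact Or.inr (Sym2.eq_swap)
      · rintro (rfl | rfl)
        · exact ⟨y₀, Or.inl rfl, Sym2.eq_swap⟩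
        · exact ⟨z₀, Or.inr rfl, Sym2.eq_swap⟩

lemma card_Q2 {d : ℕ} (hd : r ≤ d) :
    ((((Tset (Gg H (d + 1))).filter (fun s => ∃ e ∈ s, Fin.last d ∈ e)).filter
        (fun s => ¬ ∀ e ∈ s, Fin.last d ∈ e)).filter
        (fun s => ∃ e ∈ s, ∃ f ∈ s, e ≠ f ∧ ∃ v, v ∈ e ∧ v ∈ f)).card
      = 2 * (Gg H d).edgeFinset.card := by
  haveI : DecidableRel (Gg H d).Adj := Classical.decRel _
  have hcard : Fintype.card (Gg H d).Dart = 2 * (Gg H d).edgeFinset.card := by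
    rw [SimpleGraph.dart_card_eq_twice_card_edges]
    congr 1
    exact edgeFinset_card_indep _ _ _
  rw [← hcard, ← Finset.card_univ]
  symm
  apply Finset.card_bij (fun (D : (Gg H d).Dart) _ =>
    ({s(D.fst.castSucc, D.snd.castSucc), s(D.fst.castSucc, Fin.last d)} :
      Finset (Sym2 (Fin (d + 1)))))
  · intro D hD
    have hDadj : (Gg H (d + 1)).Adj D.fst.castSucc D.snd.castSucc :=
      (adj_cast H _ _).mpr D.adj
    have hne : s(D.fst.castSucc, D.snd.castSucc) ≠ s(D.fst.castSucc, Fin.last d) := by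
      intro h
      rcases Sym2.eq_iff.mp h with ⟨-, h2⟩ | ⟨h1, -⟩
      · exact castSucc_ne_last' D.snd h2
      · exact castSucc_ne_last' D.fst h1
    simp only [Finset.mem_filter]
    refine ⟨⟨⟨?_, ?_⟩, ?_⟩, ?_⟩
    · rw [mem_Tset]
      refine ⟨_, _, hne, by ext x; simp, mem_edgeSet_iff.mpr hDadj,
        mem_edgeSet_iff.mpr (adj_last H hd _ (castSucc_ne_last' D.fst)), ?_⟩
      exact Or.inl ⟨D.fst.castSucc, Sym2.mem_mk_left _ _, Sym2.mem_mk_left _ _⟩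
    · exact ⟨s(D.fst.castSucc, Fin.last d), by simp, Sym2.mem_mk_right _ _⟩
    · intro hall
      have := hall s(D.fst.castSucc, D.snd.castSucc) (by simp)
      rcases Sym2.mem_iff.mp this with h | h
      · exact castSucc_ne_last' D.fst h.symm
      · exact castSucc_ne_last' D.snd h.symm
    · exact ⟨_, by simp, _, by simp [hne], hne,
        ⟨D.fst.castSucc, Sym2.mem_mk_left _ _, Sym2.mem_mk_left _ _⟩⟩
  · intro D1 hD1 D2 hD2 h
    have h1mem : s(D1.fst.castSucc, Fin.last d) ∈
        ({s(D2.fst.castSucc, D2.snd.castSucc), s(D2.fst.castSucc, Fin.last d)} :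
          Finset (Sym2 (Fin (d + 1)))) := by
      rw [← h]; simp
    simp only [Finset.mem_insert, Finset.mem_singleton] at h1mem
    have hfst : D1.fst = D2.fst := by
      rcases h1mem with hmm | hmm
      · rcases Sym2.eq_iff.mp hmm with ⟨-, h2'⟩ | ⟨-, h2'⟩
        · exact absurd h2'.symm (castSucc_ne_last' D2.snd)
        · exact absurd h2'.symm (castSucc_ne_last' D2.fst)
      · rcases Sym2.eq_iff.mp hmm with ⟨h1', -⟩ | ⟨h1', -⟩
        · exact Fin.castSucc_inj.mp h1'
        · exact absurd h1' (castSucc_ne_last' D1.fst)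
    have h2mem : s(D1.fst.castSucc, D1.snd.castSucc) ∈
        ({s(D2.fst.castSucc, D2.snd.castSucc), s(D2.fst.castSucc, Fin.last d)} :
          Finset (Sym2 (Fin (d + 1)))) := by
      rw [← h]; simp
    simp only [Finset.mem_insert, Finset.mem_singleton] at h2mem
    have hsnd : D1.snd = D2.snd := by
      rcases h2mem with hmm | hmm
      · rcases Sym2.eq_iff.mp hmm with ⟨-, h2'⟩ | ⟨h1', h2'⟩
        · exact Fin.castSucc_inj.mp h2'
        · exfalso
          apply D2.fst_ne_snd
          rw [← hfst, Fin.castSucc_inj.mp h1']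
      · rcases Sym2.eq_iff.mp hmm with ⟨-, h2'⟩ | ⟨h1', -⟩
        · exact absurd h2' (castSucc_ne_last' D1.snd)
        · exact absurd h1' (castSucc_ne_last' D1.fst)
    exact SimpleGraph.Dart.ext _ _ (Prod.ext hfst hsnd)
  · intro t ht
    simp only [Finset.mem_filter] at ht
    obtain ⟨⟨⟨ht, hQ⟩, hnQ1⟩, hR⟩ := ht
    obtain ⟨e, f, hef, rfl, he, hf, hp⟩ := (mem_Tset _ _).mp ht
    have key : ∀ e' f' : Sym2 (Fin (d + 1)), e' ∈ (Gg H (d + 1)).edgeSet →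
        Fin.last d ∈ f' → Fin.last d ∉ e' →
        (∃ v, v ∈ e' ∧ v ∈ f') →
        ∃ D : (Gg H d).Dart,
          s(D.fst.castSucc, D.snd.castSucc) = e' ∧
          s(D.fst.castSucc, Fin.last d) = f' := by
      intro e' f' he' hlf hle hsh
      obtain ⟨v, hve, hvf⟩ := hsh
      obtain ⟨w, hfw⟩ := Sym2.mem_iff_exists.mp hlf
      have hvw : v = w := by
        rcases Sym2.mem_iff.mp (hfw ▸ hvf) with h | h
        · exact absurd (h ▸ hve) hle
        · exact h
      subst hvw
      obtain ⟨u, heu⟩ := Sym2.mem_iff_exists.mp hve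
      have hulast : u ≠ Fin.last d := fun h => hle (h ▸ (heu ▸ Sym2.mem_mk_right v u))
      have hwlast : v ≠ Fin.last d := fun h => hle (h ▸ hve)
      obtain ⟨w₀, rfl⟩ := Fin.exists_castSucc_eq.mpr hwlast
      obtain ⟨u₀, rfl⟩ := Fin.exists_castSucc_eq.mpr hulast
      have hadj : (Gg H d).Adj w₀ u₀ :=
        (adj_cast H _ _).mp (mem_edgeSet_iff.mp (heu ▸ he'))
      refine ⟨⟨(w₀, u₀), hadj⟩, heu.symm, ?_⟩
      rw [hfw, Sym2.eq_swap]
    by_cases hle : Fin.last d ∈ e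
    · by_cases hlf : Fin.last d ∈ f
      · exfalso
        apply hnQ1
        intro e' he'
        simp only [Finset.mem_insert, Finset.mem_singleton] at he'
        rcases he' with rfl | rfl
        · exact hle
        · exact hlf
      · have hshare : ∃ v, v ∈ f ∧ v ∈ e := by
          obtain ⟨e1, he1, f1, hf1, hne1, v, hv1, hv2⟩ := hR
          simp only [Finset.mem_insert, Finset.mem_singleton] at he1 hf1
          rcases he1 with rfl | rfl <;> rcases hf1 with rfl | rfl
          · exact absurd rfl hne1
          · exact ⟨v, hv2, hv1⟩
          · exact ⟨v, hv1, hv2⟩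
          · exact absurd rfl hne1
        obtain ⟨D, hA, hB⟩ := key f e hf hle hlf hshare
        refine ⟨D, by simp, ?_⟩
        ext x
        simp only [Finset.mem_insert, Finset.mem_singleton, hA, hB]
        exact or_comm
    · have hlf : Fin.last d ∈ f := by
        obtain ⟨e', he', hlast⟩ := hQ
        simp only [Finset.mem_insert, Finset.mem_singleton] at he'
        rcases he' with rfl | rfl
        · exact absurd hlast hle
        · exact hlast
      have hshare : ∃ v, v ∈ e ∧ v ∈ f := by
        obtain ⟨e1, he1, f1, hf1, hne1, v, hv1, hv2⟩ := hR
        simp only [Finset.mem_insert, Finset.mem_singleton] at he1 hf1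
        rcases he1 with rfl | rfl <;> rcases hf1 with rfl | rfl
        · exact absurd rfl hne1
        · exact ⟨v, hv1, hv2⟩
        · exact ⟨v, hv2, hv1⟩
        · exact absurd rfl hne1
      obtain ⟨D, hA, hB⟩ := key e f he hlf hle hshare
      refine ⟨D, by simp, ?_⟩
      ext x
      simp only [Finset.mem_insert, Finset.mem_singleton, hA, hB]

open scoped Classical in
/-- triples of `Fin m` inducing a 2-path in the embedded copy of `H`. -/
noncomputable def PsiSet (m : ℕ) : Finset (Finset (Fin m)) :=
  Finset.univ.filter (fun t : Finset (Fin m) => ∃ a b c : Fin m,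
    t = {a, b, c} ∧ a ≠ b ∧ a ≠ c ∧ b ≠ c ∧ (embedGraph H m).Adj a b ∧
    (embedGraph H m).Adj b c ∧ ¬(embedGraph H m).Adj a c)

lemma mem_PsiSet {m : ℕ} (t : Finset (Fin m)) :
    t ∈ PsiSet H m ↔ ∃ a b c : Fin m,
      t = {a, b, c} ∧ a ≠ b ∧ a ≠ c ∧ b ≠ c ∧ (embedGraph H m).Adj a b ∧
      (embedGraph H m).Adj b c ∧ ¬(embedGraph H m).Adj a c := by
  rw [PsiSet, Finset.mem_filter]
  simp only [Finset.mem_univ, true_and]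

lemma image_triple {α β : Type*} [DecidableEq α] [DecidableEq β] (g : α → β) (a b c : α) :
    ({a, b, c} : Finset α).image g = {g a, g b, g c} := by
  ext x
  simp only [Finset.mem_image, Finset.mem_insert, Finset.mem_singleton]
  constructor
  · rintro ⟨u, (rfl | rfl | rfl), rfl⟩
    · exact Or.inl rfl
    · exact Or.inr (Or.inl rfl)
    · exact Or.inr (Or.inr rfl)
  · rintro (rfl | rfl | rfl)
    exacts [⟨a, Or.inl rfl, rfl⟩, ⟨b, Or.inr (Or.inl rfl), rfl⟩,
      ⟨c, Or.inr (Or.inr rfl), rfl⟩]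

open scoped Classical in
/-- the finset whose cardinality is `psi`. -/
noncomputable def PsiSmall {V : Type*} [Fintype V] (K : SimpleGraph V) : Finset (Finset V) :=
  ((univ.powersetCard 3).filter (fun s => ∃ a b c : V,
    s = {a, b, c} ∧ a ≠ b ∧ a ≠ c ∧ b ≠ c ∧ K.Adj a b ∧ K.Adj b c ∧ ¬K.Adj a c))

lemma psi_eq {V : Type*} [Fintype V] (K : SimpleGraph V) : psi K = (PsiSmall K).card := rfl

lemma psi_embed {m : ℕ} (hrm : r ≤ m) : psi H = (PsiSet H m).card := by
  have hinj : Function.Injective (Fin.castLE hrm) := Fin.castLE_injective hrm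
  rw [psi_eq]
  apply Finset.card_bij (fun t _ => t.image (Fin.castLE hrm))
  · intro t ht
    simp only [PsiSmall, Finset.mem_filter] at ht
    obtain ⟨-, a, b, c, rfl, hab, hac, hbc, A1, A2, A3⟩ := ht
    rw [mem_PsiSet]
    refine ⟨Fin.castLE hrm a, Fin.castLE hrm b, Fin.castLE hrm c, ?_,
      fun h => hab (hinj h), fun h => hac (hinj h), fun h => hbc (hinj h),
      ⟨a.isLt, b.isLt, A1⟩, ⟨b.isLt, c.isLt, A2⟩, ?_⟩
    · ext x
      simp only [Finset.mem_image, Finset.mem_insert, Finset.mem_singleton]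
      constructor
      · rintro ⟨u, (rfl | rfl | rfl), rfl⟩
        · exact Or.inl rfl
        · exact Or.inr (Or.inl rfl)
        · exact Or.inr (Or.inr rfl)
      · rintro (rfl | rfl | rfl)
        exacts [⟨a, Or.inl rfl, rfl⟩, ⟨b, Or.inr (Or.inl rfl), rfl⟩,
          ⟨c, Or.inr (Or.inr rfl), rfl⟩]
    · intro hx
      obtain ⟨hi, hj, h⟩ := (embed_adj_iff H _ _).mp hx
      exact A3 h
  · intro t1 h1 t2 h2 h
    exact Finset.image_injective hinj h
  · intro t' ht'
    rw [mem_PsiSet] at ht'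
    obtain ⟨a, b, c, rfl, hab, hac, hbc, A1, A2, A3⟩ := ht'
    obtain ⟨har, hbr, h1⟩ := id A1
    obtain ⟨hbr', hcr, h2⟩ := id A2
    refine ⟨{⟨(a : ℕ), har⟩, ⟨(b : ℕ), hbr⟩, ⟨(c : ℕ), hcr⟩}, ?_, ?_⟩
    · simp only [PsiSmall, Finset.mem_filter]
      constructor
      · rw [Finset.mem_powersetCard]
        refine ⟨Finset.subset_univ _, ?_⟩
        rw [Finset.card_insert_of_notMem, Finset.card_insert_of_notMem,
          Finset.card_singleton]
        · simp only [Finset.mem_singleton]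
          intro h
          exact hbc (by rw [← Fin.val_eq_val] at h ⊢; exact h)
        · simp only [Finset.mem_insert, Finset.mem_singleton]
          rintro (h | h)
          · exact hab (by rw [← Fin.val_eq_val] at h ⊢; exact h)
          · exact hac (by rw [← Fin.val_eq_val] at h ⊢; exact h)
      · refine ⟨⟨(a : ℕ), har⟩, ⟨(b : ℕ), hbr⟩, ⟨(c : ℕ), hcr⟩, by ext x; simp,
          fun h => hab (by rw [← Fin.val_eq_val] at h ⊢; exact h),
          fun h => hac (by rw [← Fin.val_eq_val] at h ⊢; exact h),
          fun h => hbc (by rw [← Fin.val_eq_val] at h ⊢; exact h),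
          h1, h2, ?_⟩
        intro h
        exact A3 ⟨har, hcr, h⟩
    · ext x
      simp only [Finset.mem_image, Finset.mem_insert, Finset.mem_singleton]
      have e1 : Fin.castLE hrm ⟨(a : ℕ), har⟩ = a := rfl
      have e2 : Fin.castLE hrm ⟨(b : ℕ), hbr⟩ = b := rfl
      have e3 : Fin.castLE hrm ⟨(c : ℕ), hcr⟩ = c := rfl
      constructor
      · rintro ⟨u, (rfl | rfl | rfl), rfl⟩
        · exact Or.inl e1
        · exact Or.inr (Or.inl e2)
        · exact Or.inr (Or.inr e3)
      · rintro (rfl | rfl | rfl)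
        exacts [⟨_, Or.inl rfl, e1⟩, ⟨_, Or.inr (Or.inl rfl), e2⟩,
          ⟨_, Or.inr (Or.inr rfl), e3⟩]

lemma card_Q3 {d : ℕ} (hd : r ≤ d) :
    ((((Tset (Gg H (d + 1))).filter (fun s => ∃ e ∈ s, Fin.last d ∈ e)).filter
        (fun s => ¬ ∀ e ∈ s, Fin.last d ∈ e)).filter
        (fun s => ¬ ∃ e ∈ s, ∃ f ∈ s, e ≠ f ∧ ∃ v, v ∈ e ∧ v ∈ f)).card
      = psi H := by
  have hrm : r ≤ d + 1 := le_trans hd (Nat.le_succ d)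
  rw [psi_embed H hrm]
  -- every vertex appearing in an embedded edge is not the last vertex
  have hnl : ∀ v : Fin (d + 1), ∀ w : Fin (d + 1), (embedGraph H (d + 1)).Adj v w →
      v ≠ Fin.last d := by
    intro v w hvw h
    obtain ⟨hi, hj, -⟩ := (embed_adj_iff H _ _).mp hvw
    rw [h, Fin.val_last] at hi
    omega
  -- structure of members of the left-hand set
  have struct : ∀ s ∈ (((Tset (Gg H (d + 1))).filter
        (fun s => ∃ e ∈ s, Fin.last d ∈ e)).filter
        (fun s => ¬ ∀ e ∈ s, Fin.last d ∈ e)).filter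
        (fun s => ¬ ∃ e ∈ s, ∃ f ∈ s, e ≠ f ∧ ∃ v, v ∈ e ∧ v ∈ f),
      ∃ a b w : Fin (d + 1), s = {s(a, b), s(w, Fin.last d)} ∧
        (embedGraph H (d + 1)).Adj w a ∧ (embedGraph H (d + 1)).Adj w b ∧
        ¬ (embedGraph H (d + 1)).Adj a b ∧ a ≠ b ∧ w ≠ a ∧ w ≠ b ∧
        a ≠ Fin.last d ∧ b ≠ Fin.last d ∧ w ≠ Fin.last d := by
    intro s hs
    simp only [Finset.mem_filter] at hs
    obtain ⟨⟨⟨ht, hQ⟩, hnQ1⟩, hnR⟩ := hs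
    obtain ⟨e, f, hef, rfl, he, hf, hp⟩ := (mem_Tset _ _).mp ht
    have hdisj : ¬ ∃ v, v ∈ e ∧ v ∈ f := by
      rintro ⟨v, hv1, hv2⟩
      exact hnR ⟨e, by simp, f, by simp, hef, v, hv1, hv2⟩
    have hnc : ¬ fourCycleOn (Gg H (d + 1)) {v | v ∈ e ∨ v ∈ f} := by
      rcases hp with hsh | ⟨-, hnc⟩
      · exact absurd hsh hdisj
      · exact hnc
    have key : ∀ e' f' : Sym2 (Fin (d + 1)), e' ∈ (Gg H (d + 1)).edgeSet →
        f' ∈ (Gg H (d + 1)).edgeSet → (¬ ∃ v, v ∈ e' ∧ v ∈ f') →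
        ¬ fourCycleOn (Gg H (d + 1)) {v | v ∈ e' ∨ v ∈ f'} →
        Fin.last d ∈ f' → Fin.last d ∉ e' →
        ∃ a b w : Fin (d + 1), e' = s(a, b) ∧ f' = s(w, Fin.last d) ∧
          (embedGraph H (d + 1)).Adj w a ∧ (embedGraph H (d + 1)).Adj w b ∧
          ¬ (embedGraph H (d + 1)).Adj a b ∧ a ≠ b ∧ w ≠ a ∧ w ≠ b ∧
          a ≠ Fin.last d ∧ b ≠ Fin.last d ∧ w ≠ Fin.last d := by
      intro e' f' he' hf' hdisj' hnc' hlf hle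
      obtain ⟨w, hfw⟩ := Sym2.mem_iff_exists.mp hlf
      have hwl : w ≠ Fin.last d := fun h =>
        (Gg H (d + 1)).irrefl (h ▸ mem_edgeSet_iff.mp (hfw ▸ hf'))
      obtain ⟨a, b, heab⟩ := sym2_rep e'
      have hadjab : (Gg H (d + 1)).Adj a b := mem_edgeSet_iff.mp (heab ▸ he')
      have hab : a ≠ b := hadjab.ne
      have hae : a ∈ e' := heab ▸ Sym2.mem_mk_left a b
      have hbe : b ∈ e' := heab ▸ Sym2.mem_mk_right a b
      have hwf : w ∈ f' := hfw ▸ Sym2.mem_mk_right _ _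
      have hlfm : Fin.last d ∈ f' := hlf
      have hal : a ≠ Fin.last d := fun h => hle (h ▸ hae)
      have hbl : b ≠ Fin.last d := fun h => hle (h ▸ hbe)
      have hwa : w ≠ a := fun h => hdisj' ⟨a, hae, h ▸ hwf⟩
      have hwb : w ≠ b := fun h => hdisj' ⟨b, hbe, h ▸ hwf⟩
      have hnab : ¬ (embedGraph H (d + 1)).Adj a b :=
        ((adj_iff H a b).mp hadjab).2
      have hWA : (embedGraph H (d + 1)).Adj w a := by
        by_contra hna
        have hGwa : (Gg H (d + 1)).Adj w a := (adj_iff H w a).mpr ⟨hwa, hna⟩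
        exact hnc' ⟨b, a, w, Fin.last d, Or.inl hbe, Or.inl hae, Or.inr hwf,
          Or.inr hlfm, hab.symm, fun h => hwb h.symm, hbl, hwa.symm, hal, hwl,
          hadjab.symm, hGwa.symm, adj_last H hd w hwl, (adj_last H hd b hbl).symm⟩
      have hWB : (embedGraph H (d + 1)).Adj w b := by
        by_contra hna
        have hGbw : (Gg H (d + 1)).Adj b w :=
          (adj_iff H b w).mpr ⟨hwb.symm, fun hx => hna (SimpleGraph.Adj.symm hx)⟩
        exact hnc' ⟨a, b, w, Fin.last d, Or.inl hae, Or.inl hbe, Or.inr hwf,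
          Or.inr hlfm, hab, hwa.symm, hal, hwb.symm, hbl, hwl,
          hadjab, hGbw, adj_last H hd w hwl, (adj_last H hd a hal).symm⟩
      refine ⟨a, b, w, heab, ?_, hWA, hWB, hnab, hab, hwa, hwb, hal, hbl, hwl⟩
      rw [hfw, Sym2.eq_swap]
    by_cases hle : Fin.last d ∈ e
    · have hlf : Fin.last d ∉ f := by
        intro hlf
        apply hnQ1
        intro e' he'
        simp only [Finset.mem_insert, Finset.mem_singleton] at he'
        rcases he' with rfl | rfl
        · exact hle
        · exact hlf
      have hdisj2 : ¬ ∃ v, v ∈ f ∧ v ∈ e := by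
        rintro ⟨v, h1, h2⟩; exact hdisj ⟨v, h2, h1⟩
      have hnc2 : ¬ fourCycleOn (Gg H (d + 1)) {v | v ∈ f ∨ v ∈ e} := by
        have hset : {v | v ∈ f ∨ v ∈ e} = {v | v ∈ e ∨ v ∈ f} := by
          ext v; exact or_comm
        rw [hset]; exact hnc
      obtain ⟨a, b, w, hfeq, heeq, facts⟩ := key f e hf he hdisj2 hnc2 hle hlf
      refine ⟨a, b, w, ?_, facts⟩
      ext u
      simp only [Finset.mem_insert, Finset.mem_singleton, hfeq, heeq]
      exact or_comm
    · have hlf : Fin.last d ∈ f := by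
        obtain ⟨e', he', hlast⟩ := hQ
        simp only [Finset.mem_insert, Finset.mem_singleton] at he'
        rcases he' with rfl | rfl
        · exact absurd hlast hle
        · exact hlast
      obtain ⟨a, b, w, heeq, hfeq, facts⟩ := key e f he hf hdisj hnc hlf hle
      refine ⟨a, b, w, ?_, facts⟩
      ext u
      simp only [Finset.mem_insert, Finset.mem_singleton, heeq, hfeq]
  -- the value of the vertex map on structured sets
  have hival : ∀ a b w : Fin (d + 1), a ≠ Fin.last d → b ≠ Fin.last d →
      w ≠ Fin.last d →
      (Finset.univ.filter (fun v : Fin (d + 1) =>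
        (∃ e ∈ ({s(a, b), s(w, Fin.last d)} : Finset (Sym2 (Fin (d + 1)))), v ∈ e) ∧
          v ≠ Fin.last d)) = {a, b, w} := by
    intro a b w ha hb hw
    ext v
    simp only [Finset.mem_filter, Finset.mem_univ, true_and, Finset.mem_insert,
      Finset.mem_singleton]
    constructor
    · rintro ⟨⟨e, he, hv⟩, hvl⟩
      rcases he with rfl | rfl
      · rcases Sym2.mem_iff.mp hv with rfl | rfl
        · exact Or.inl rfl
        · exact Or.inr (Or.inl rfl)
      · rcases Sym2.mem_iff.mp hv with rfl | rfl
        · exact Or.inr (Or.inr rfl)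
        · exact absurd rfl hvl
    · rintro (rfl | rfl | rfl)
      · exact ⟨⟨s(v, b), by simp, Sym2.mem_mk_left _ _⟩, ha⟩
      · exact ⟨⟨s(a, v), by simp, Sym2.mem_mk_right _ _⟩, hb⟩
      · exact ⟨⟨s(v, Fin.last d), by simp, Sym2.mem_mk_left _ _⟩, hw⟩
  apply Finset.card_bij (fun s _ => Finset.univ.filter (fun v : Fin (d + 1) =>
    (∃ e ∈ s, v ∈ e) ∧ v ≠ Fin.last d))
  · intro s hs
    obtain ⟨a, b, w, rfl, HA, HB, HN, hab, hwa, hwb, hal, hbl, hwl⟩ := struct _ hs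
    rw [hival a b w hal hbl hwl, mem_PsiSet]
    refine ⟨a, w, b, ?_, fun h => hwa h.symm, hab, hwb, HA.symm, HB, HN⟩
    ext x
    simp only [Finset.mem_insert, Finset.mem_singleton]
    constructor
    · rintro (rfl | rfl | rfl)
      · exact Or.inl rfl
      · exact Or.inr (Or.inr rfl)
      · exact Or.inr (Or.inl rfl)
    · rintro (rfl | rfl | rfl)
      · exact Or.inl rfl
      · exact Or.inr (Or.inr rfl)
      · exact Or.inr (Or.inl rfl)
  · intro s1 hs1 s2 hs2 hi
    obtain ⟨a1, b1, w1, rfl, HA1, HB1, HN1, hab1, hwa1, hwb1, hal1, hbl1, hwl1⟩ :=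
      struct _ hs1
    obtain ⟨a2, b2, w2, rfl, HA2, HB2, HN2, hab2, hwa2, hwb2, hal2, hbl2, hwl2⟩ :=
      struct _ hs2
    rw [hival a1 b1 w1 hal1 hbl1 hwl1, hival a2 b2 w2 hal2 hbl2 hwl2] at hi
    have ma2 : a2 = a1 ∨ a2 = b1 ∨ a2 = w1 := by
      have : a2 ∈ ({a1, b1, w1} : Finset (Fin (d + 1))) := by rw [hi]; simp
      simpa using this
    have mb2 : b2 = a1 ∨ b2 = b1 ∨ b2 = w1 := by
      have : b2 ∈ ({a1, b1, w1} : Finset (Fin (d + 1))) := by rw [hi]; simp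
      simpa using this
    have mw2 : w2 = a1 ∨ w2 = b1 ∨ w2 = w1 := by
      have : w2 ∈ ({a1, b1, w1} : Finset (Fin (d + 1))) := by rw [hi]; simp
      simpa using this
    have HN1' : ¬ (embedGraph H (d + 1)).Adj b1 a1 := fun h => HN1 h.symm
    have hww : w2 = w1 := by
      rcases mw2 with h | h | h
      · -- w2 = a1 : impossible
        exfalso
        subst h
        rcases ma2 with h' | h' | h'
        · subst h'; exact (embedGraph H (d + 1)).irrefl HA2
        · subst h'; exact HN1 HA2
        · subst h'
          rcases mb2 with h'' | h'' | h''
          · subst h''; exact (embedGraph H (d + 1)).irrefl HB2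
          · subst h''; exact HN1 HB2
          · subst h''; exact hab2 rfl
      · -- w2 = b1 : impossible
        exfalso
        subst h
        rcases ma2 with h' | h' | h'
        · subst h'; exact HN1' HA2
        · subst h'; exact (embedGraph H (d + 1)).irrefl HA2
        · subst h'
          rcases mb2 with h'' | h'' | h''
          · subst h''; exact HN1' HB2
          · subst h''; exact (embedGraph H (d + 1)).irrefl HB2
          · subst h''; exact hab2 rfl
      · exact h
    subst hww
    have hpair : s(a2, b2) = s(a1, b1) := by
      rcases ma2 with h' | h' | h'
      · rcases mb2 with h'' | h'' | h''
        · exact absurd (h'.trans h''.symm) hab2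
        · rw [h', h'']
        · exact absurd h''.symm hwb2
      · rcases mb2 with h'' | h'' | h''
        · rw [h', h'', Sym2.eq_swap]
        · exact absurd (h'.trans h''.symm) hab2
        · exact absurd h''.symm hwb2
      · exact absurd h'.symm hwa2
    rw [hpair]
  · intro t htP
    rw [mem_PsiSet] at htP
    obtain ⟨x, y, z, rfl, hxy, hxz, hyz, A1, A2, A3⟩ := htP
    obtain ⟨hxr, hyr, -⟩ := id ((embed_adj_iff H _ _).mp A1)
    obtain ⟨hyr', hzr, -⟩ := id ((embed_adj_iff H _ _).mp A2)
    have hxl : x ≠ Fin.last d := hnl x y A1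
    have hyl : y ≠ Fin.last d := hnl y z A2
    have hzl : z ≠ Fin.last d := hnl z y A2.symm
    have hGxz : (Gg H (d + 1)).Adj x z := (adj_iff H x z).mpr ⟨hxz, A3⟩
    have hdisj0 : ¬ ∃ v, v ∈ s(x, z) ∧ v ∈ s(y, Fin.last d) := by
      rintro ⟨v, hv1, hv2⟩
      rcases Sym2.mem_iff.mp hv1 with rfl | rfl <;>
        rcases Sym2.mem_iff.mp hv2 with h | h
      · exact hxy h
      · exact hxl h
      · exact hyz h.symm
      · exact hzl h
    have hne0 : s(x, z) ≠ s(y, Fin.last d) := by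
      intro h
      rcases Sym2.eq_iff.mp h with ⟨h1, -⟩ | ⟨h1, -⟩
      · exact hxy h1
      · exact hxl h1
    refine ⟨{s(x, z), s(y, Fin.last d)}, ?_, ?_⟩
    · simp only [Finset.mem_filter]
      refine ⟨⟨⟨?_, ?_⟩, ?_⟩, ?_⟩
      · rw [mem_Tset]
        refine ⟨s(x, z), s(y, Fin.last d), hne0, by ext u; simp,
          mem_edgeSet_iff.mpr hGxz,
          mem_edgeSet_iff.mpr (adj_last H hd y hyl), ?_⟩
        refine Or.inr ⟨hdisj0, ?_⟩
        rintro ⟨p, q, s', t', hpm, hqm, hsm, htm, hpq, hps, hpt, hqs, hqt, hst,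
          B1, B2, B3, B4⟩
        have hnbr : ∀ u : Fin (d + 1), (u ∈ s(x, z) ∨ u ∈ s(y, Fin.last d)) →
            (Gg H (d + 1)).Adj y u → u = Fin.last d := by
          intro u hu hadj
          rcases hu with hu | hu
          · rcases Sym2.mem_iff.mp hu with rfl | rfl
            · exact absurd A1.symm ((adj_iff H y u).mp hadj).2
            · exact absurd A2 ((adj_iff H y u).mp hadj).2
          · rcases Sym2.mem_iff.mp hu with rfl | rfl
            · exact absurd hadj ((Gg H (d + 1)).irrefl)
            · rfl
        have hymem : y = p ∨ y = q ∨ y = s' ∨ y = t' := by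
          by_contra hcon
          push_neg at hcon
          obtain ⟨h1, h2, h3, h4⟩ := hcon
          have hmemv : ∀ u : Fin (d + 1),
              (u ∈ s(x, z) ∨ u ∈ s(y, Fin.last d)) → u ≠ y →
              u = x ∨ u = z ∨ u = Fin.last d := by
            intro u hu huy
            rcases hu with hu | hu
            · rcases Sym2.mem_iff.mp hu with rfl | rfl
              · exact Or.inl rfl
              · exact Or.inr (Or.inl rfl)
            · rcases Sym2.mem_iff.mp hu with rfl | rfl
              · exact absurd rfl huy
              · exact Or.inr (Or.inr rfl)
          have hp' := hmemv p hpm (fun h => h1 h.symm)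
          have hq' := hmemv q hqm (fun h => h2 h.symm)
          have hs' := hmemv s' hsm (fun h => h3 h.symm)
          have ht' := hmemv t' htm (fun h => h4 h.symm)
          rcases hp' with rfl | rfl | rfl <;> rcases hq' with rfl | rfl | rfl <;>
            rcases hs' with rfl | rfl | rfl <;> rcases ht' with rfl | rfl | rfl <;>
            first
            | exact hpq rfl
            | exact hps rfl
            | exact hpt rfl
            | exact hqs rfl
            | exact hqt rfl
            | exact hst rfl
        rcases hymem with rfl | rfl | rfl | rfl
        · exact hqt ((hnbr q hqm B1).trans (hnbr t' htm B4.symm).symm)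
        · exact hps ((hnbr p hpm B1.symm).trans (hnbr s' hsm B2).symm)
        · exact hqt ((hnbr q hqm B2.symm).trans (hnbr t' htm B3).symm)
        · exact hps ((hnbr p hpm B4).trans (hnbr s' hsm B3.symm).symm)
      · exact ⟨s(y, Fin.last d), by simp, Sym2.mem_mk_right _ _⟩
      · intro hall
        have := hall s(x, z) (by simp)
        rcases Sym2.mem_iff.mp this with h | h
        · exact hxl h.symm
        · exact hzl h.symm
      · rintro ⟨e1, he1, f1, hf1, hne1, v, hv1, hv2⟩
        simp only [Finset.mem_insert, Finset.mem_singleton] at he1 hf1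
        rcases he1 with rfl | rfl <;> rcases hf1 with rfl | rfl
        · exact hne1 rfl
        · exact hdisj0 ⟨v, hv1, hv2⟩
        · exact hdisj0 ⟨v, hv2, hv1⟩
        · exact hne1 rfl
    · rw [hival x z y hxl hzl hyl]
      ext u
      simp only [Finset.mem_insert, Finset.mem_singleton]
      constructor
      · rintro (rfl | rfl | rfl)
        · exact Or.inl rfl
        · exact Or.inr (Or.inr rfl)
        · exact Or.inr (Or.inl rfl)
      · rintro (rfl | rfl | rfl)
        · exact Or.inl rfl
        · exact Or.inr (Or.inr rfl)
        · exact Or.inr (Or.inl rfl)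


lemma main_step {d : ℕ} (hd : r ≤ d) :
    epsilon (Gg H (d + 1)) =
      epsilon (Gg H d) + (d.choose 2 + (2 * (Gg H d).edgeFinset.card + psi H)) := by
  have h0 : ((Tset (Gg H (d + 1))).filter (fun s => ∃ e ∈ s, Fin.last d ∈ e)).card +
      ((Tset (Gg H (d + 1))).filter (fun s => ¬ ∃ e ∈ s, Fin.last d ∈ e)).card =
      (Tset (Gg H (d + 1))).card :=
    Finset.card_filter_add_card_filter_not _
  have h1 : (((Tset (Gg H (d + 1))).filter (fun s => ∃ e ∈ s, Fin.last d ∈ e)).filter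
        (fun s => ∀ e ∈ s, Fin.last d ∈ e)).card +
      (((Tset (Gg H (d + 1))).filter (fun s => ∃ e ∈ s, Fin.last d ∈ e)).filter
        (fun s => ¬ ∀ e ∈ s, Fin.last d ∈ e)).card =
      ((Tset (Gg H (d + 1))).filter (fun s => ∃ e ∈ s, Fin.last d ∈ e)).card :=
    Finset.card_filter_add_card_filter_not _
  have h2 : ((((Tset (Gg H (d + 1))).filter (fun s => ∃ e ∈ s, Fin.last d ∈ e)).filter
        (fun s => ¬ ∀ e ∈ s, Fin.last d ∈ e)).filter
        (fun s => ∃ e ∈ s, ∃ f ∈ s, e ≠ f ∧ ∃ v, v ∈ e ∧ v ∈ f)).card +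
      ((((Tset (Gg H (d + 1))).filter (fun s => ∃ e ∈ s, Fin.last d ∈ e)).filter
        (fun s => ¬ ∀ e ∈ s, Fin.last d ∈ e)).filter
        (fun s => ¬ ∃ e ∈ s, ∃ f ∈ s, e ≠ f ∧ ∃ v, v ∈ e ∧ v ∈ f)).card =
      (((Tset (Gg H (d + 1))).filter (fun s => ∃ e ∈ s, Fin.last d ∈ e)).filter
        (fun s => ¬ ∀ e ∈ s, Fin.last d ∈ e)).card :=
    Finset.card_filter_add_card_filter_not _
  have hA := card_notQ H (d := d)
  have hB := card_Q1 H hd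
  have hC := card_Q2 H hd
  have hD := card_Q3 H hd
  rw [epsilon_eq (Gg H (d + 1))]
  omega

lemma embed_edge_card {d : ℕ} (hd : r ≤ d) :
    (embedGraph H d).edgeFinset.card = H.edgeFinset.card := by
  symm
  apply Finset.card_bij (fun e _ => Sym2.map (Fin.castLE hd) e)
  · intro e he
    rw [SimpleGraph.mem_edgeFinset] at he ⊢
    obtain ⟨x, y, rfl⟩ := sym2_rep e
    rw [Sym2.map_pair_eq]
    have hadj : H.Adj x y := mem_edgeSet_iff.mp he
    exact mem_edgeSet_iff.mpr ⟨x.isLt, y.isLt, hadj⟩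
  · intro e1 h1 e2 h2 h
    exact Sym2.map.injective (Fin.castLE_injective hd) h
  · intro e' he'
    rw [SimpleGraph.mem_edgeFinset] at he'
    obtain ⟨u, v, rfl⟩ := sym2_rep e'
    obtain ⟨hu, hv, h⟩ := mem_edgeSet_iff.mp he'
    refine ⟨s(⟨(u : ℕ), hu⟩, ⟨(v : ℕ), hv⟩), ?_, ?_⟩
    · rw [SimpleGraph.mem_edgeFinset]
      exact mem_edgeSet_iff.mpr h
    · rw [Sym2.map_pair_eq]
      have e1 : Fin.castLE hd ⟨(u : ℕ), hu⟩ = u := rfl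
      have e2 : Fin.castLE hd ⟨(v : ℕ), hv⟩ = v := rfl
      rw [e1, e2]

lemma edge_count {d : ℕ} (hd : r ≤ d) :
    (Gg H d).edgeFinset.card + H.edgeFinset.card = d.choose 2 := by
  have hsub : (embedGraph H d).edgeFinset ⊆ (⊤ : SimpleGraph (Fin d)).edgeFinset :=
    SimpleGraph.edgeFinset_mono le_top
  have h1 : (Gg H d).edgeFinset.card =
      (⊤ : SimpleGraph (Fin d)).edgeFinset.card - (embedGraph H d).edgeFinset.card := by
    rw [SimpleGraph.edgeFinset_sdiff, Finset.card_sdiff_of_subset hsub]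
  have h2 := Finset.card_le_card hsub
  have h3 : (⊤ : SimpleGraph (Fin d)).edgeFinset.card = d.choose 2 := by
    rw [SimpleGraph.card_edgeFinset_top_eq_card_choose_two, Fintype.card_fin]
  have h4 := embed_edge_card H hd
  omega

lemma Gg_bot (n : ℕ) : Gg (⊥ : SimpleGraph (Fin r)) n = (⊤ : SimpleGraph (Fin n)) := by
  ext i j
  rw [adj_iff, SimpleGraph.top_adj]
  simp

lemma psi_bot : psi (⊥ : SimpleGraph (Fin r)) = 0 := by
  rw [psi_eq, Finset.card_eq_zero, Finset.eq_empty_iff_forall_notMem]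
  intro t ht
  simp only [PsiSmall, Finset.mem_filter] at ht
  obtain ⟨-, a, b, c, -, -, -, -, h, -, -⟩ := ht
  exact (SimpleGraph.bot_adj a b).mp h

end EPAux

open EPAux in
open scoped Classical in
private theorem phi_succ_sub_phi_aux (r : ℕ) (H : SimpleGraph (Fin r)) (d : ℕ) (hd : r ≤ d) :
    (((epsilon ((⊤ : SimpleGraph (Fin (d + 1))) \ embedGraph H (d + 1)) : ℤ)
        - (epsilon (⊤ : SimpleGraph (Fin (d + 1))) : ℤ))
      - ((epsilon ((⊤ : SimpleGraph (Fin d)) \ embedGraph H d) : ℤ)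
        - (epsilon (⊤ : SimpleGraph (Fin d)) : ℤ)))
    = (psi H : ℤ) - 2 * (H.edgeFinset.card : ℤ) :=  by
  have e1 : epsilon ((⊤ : SimpleGraph (Fin (d + 1))) \ embedGraph H (d + 1)) =
      epsilon ((⊤ : SimpleGraph (Fin d)) \ embedGraph H d) +
      (d.choose 2 +
        (2 * ((⊤ : SimpleGraph (Fin d)) \ embedGraph H d).edgeFinset.card + psi H)) :=
    main_step H hd
  have e2 := main_step (⊥ : SimpleGraph (Fin r)) hd
  have hb1 : epsilon (Gg (⊥ : SimpleGraph (Fin r)) (d + 1)) =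
      epsilon (⊤ : SimpleGraph (Fin (d + 1))) := congrArg _ (Gg_bot (d + 1))
  have hb2 : epsilon (Gg (⊥ : SimpleGraph (Fin r)) d) =
      epsilon (⊤ : SimpleGraph (Fin d)) := congrArg _ (Gg_bot d)
  have hbe : (Gg (⊥ : SimpleGraph (Fin r)) d).edgeFinset.card = d.choose 2 := by
    have hset : (Gg (⊥ : SimpleGraph (Fin r)) d).edgeSet =
        (⊤ : SimpleGraph (Fin d)).edgeSet := by rw [Gg_bot]
    have hfin : (Gg (⊥ : SimpleGraph (Fin r)) d).edgeFinset =
        (⊤ : SimpleGraph (Fin d)).edgeFinset := Set.toFinset_congr hset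
    rw [hfin, SimpleGraph.card_edgeFinset_top_eq_card_choose_two, Fintype.card_fin]
  have hbp : psi (⊥ : SimpleGraph (Fin r)) = 0 := psi_bot
  rw [hb1, hb2, hbe, hbp] at e2
  have hE : ((⊤ : SimpleGraph (Fin d)) \ embedGraph H d).edgeFinset.card +
      H.edgeFinset.card = d.choose 2 := edge_count H hd
  omega


open scoped Classical in
theorem phi_succ_sub_phi (r : ℕ) (H : SimpleGraph (Fin r)) (d : ℕ) (hd : r ≤ d) :
    (((epsilon ((⊤ : SimpleGraph (Fin (d + 1))) \ embedGraph H (d + 1)) : ℤ)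
        - (epsilon (⊤ : SimpleGraph (Fin (d + 1))) : ℤ))
      - ((epsilon ((⊤ : SimpleGraph (Fin d)) \ embedGraph H d) : ℤ)
        - (epsilon (⊤ : SimpleGraph (Fin d)) : ℤ)))
    = (psi H : ℤ) - 2 * (H.edgeFinset.card : ℤ) :=
  phi_succ_sub_phi_aux r H d hd
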